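/- (Theorem 2) Let fleet 1 have parameters (p̄⁽¹⁾, x⁽¹⁾) ∈ ℝⁿ × ℝⁿ and fleet 2 have parameters (p̄⁽²⁾, x⁽²⁾) ∈ ℝᵐ × ℝᵐ, and let the aggregate fleet (p̄, x) ∈ ℝⁿ⁺ᵐ × ℝⁿ⁺ᵐ be their concatenation. Then the discharging flexibility of the aggregate fleet satisfies F_{p̄,x} = [0,∞)² ∖ (F^∁₁ ⊕ F^∁₂), where F^∁ⱼ is the complement of the flexibility of fleet j relative to [0,∞)² and ⊕ denotes the Minkowski sum of sets in ℝ². -/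

import Mathlib

open MeasureTheory Set Finset Pointwise Filter Topology

/-- The E-p transform of a signal `P`: the energy required above power rating `p`. -/
noncomputable def EpTransform (P : ℝ → ℝ) (p : ℝ) : ℝ :=
  ∫ t in Set.Ioi (0:ℝ), max (P t - p) 0

/-- The worst-case reference signal `R_{p̄,x}(t) = Σᵢ p̄ᵢ·𝟙[0 ≤ t < xᵢ]`. -/
noncomputable def worstCase {n : ℕ} (pbar x : Fin n → ℝ) (t : ℝ) : ℝ :=
  ∑ i, if 0 ≤ t ∧ t < x i then pbar i else 0

/-- The discharging capacity curve `Ω_{p̄,x}`. -/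
noncomputable def capacity {n : ℕ} (pbar x : Fin n → ℝ) (p : ℝ) : ℝ :=
  EpTransform (worstCase pbar x) p

/-- The discharging flexibility `F_{p̄,x} = {(p,E) ∈ [0,∞)² : E ≤ Ω_{p̄,x}(p)}`. -/
noncomputable def flexibility {n : ℕ} (pbar x : Fin n → ℝ) : Set (ℝ × ℝ) :=
  {q : ℝ × ℝ | 0 ≤ q.1 ∧ 0 ≤ q.2 ∧ q.2 ≤ capacity pbar x q.1}

/-- The complement of the flexibility relative to the quadrant `[0,∞)²`. -/
noncomputable def flexibilityCompl {n : ℕ} (pbar x : Fin n → ℝ) : Set (ℝ × ℝ) :=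
  {q : ℝ × ℝ | 0 ≤ q.1 ∧ 0 ≤ q.2 ∧ capacity pbar x q.1 < q.2}

section helpers
variable {n : ℕ} (pbar x : Fin n → ℝ)

lemma worstCase_nonneg (hp : ∀ i, 0 ≤ pbar i) (t : ℝ) : 0 ≤ worstCase pbar x t :=
  Finset.sum_nonneg fun i _ => by split <;> [exact hp i; exact le_rfl]

lemma worstCase_anti (hp : ∀ i, 0 ≤ pbar i) {s t : ℝ} (hs : 0 ≤ s) (hst : s ≤ t) :
    worstCase pbar x t ≤ worstCase pbar x s := by
  refine Finset.sum_le_sum fun i _ => ?_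
  by_cases h : 0 ≤ t ∧ t < x i
  · simp [h, hs, lt_of_le_of_lt hst h.2]
  · rw [if_neg h]
    split <;> [exact hp i; exact le_rfl]

lemma worstCase_le_sum (hp : ∀ i, 0 ≤ pbar i) (t : ℝ) :
    worstCase pbar x t ≤ ∑ i, pbar i := by
  refine Finset.sum_le_sum fun i _ => ?_
  split <;> [exact le_rfl; exact hp i]

lemma worstCase_eq_zero (hx : ∀ i, 0 ≤ x i) {t : ℝ} (ht : ∑ i, x i ≤ t) :
    worstCase pbar x t = 0 := by
  refine Finset.sum_eq_zero fun i _ => ?_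
  rw [if_neg]
  rintro ⟨h0, hlt⟩
  exact absurd (lt_of_lt_of_le hlt (Finset.single_le_sum (fun j _ => hx j) (Finset.mem_univ i))) (not_lt.2 ht)

lemma measurable_worstCase : Measurable (worstCase pbar x) := by
  unfold worstCase
  refine Finset.measurable_sum _ fun i _ => ?_
  have : (fun t : ℝ => if 0 ≤ t ∧ t < x i then pbar i else 0)
      = (Set.Ico (0:ℝ) (x i)).indicator (fun _ => pbar i) := by
    ext t; simp [Set.indicator, Set.mem_Ico]
  rw [this]
  exact (measurable_const).indicator measurableSet_Ico

lemma integrableOn_maxSub (hp : ∀ i, 0 ≤ pbar i) (hx : ∀ i, 0 ≤ x i) {p : ℝ} (hpge : 0 ≤ p) :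
    IntegrableOn (fun t => max (worstCase pbar x t - p) 0) (Set.Ioi 0) volume := by
  set M : ℝ := ∑ i, x i with hM
  have hmble : AEStronglyMeasurable (fun t => max (worstCase pbar x t - p) 0) volume :=
    (((measurable_worstCase pbar x).sub measurable_const).max measurable_const).aestronglyMeasurable
  have h1 : IntegrableOn (fun t => max (worstCase pbar x t - p) 0) (Set.Ioc 0 M) volume := by
    refine Measure.integrableOn_of_bounded (M := ∑ i, pbar i) ?_ hmble ?_
    · exact (measure_Ioc_lt_top).ne
    · refine ae_of_all _ fun t => ?_
      rw [Real.norm_eq_abs, abs_of_nonneg (le_max_right _ _)]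
      exact max_le (le_trans (sub_le_self _ hpge) (worstCase_le_sum pbar x hp t))
        (Finset.sum_nonneg fun i _ => hp i)
  have h2 : IntegrableOn (fun t => max (worstCase pbar x t - p) 0) (Set.Ioi M) volume := by
    have : EqOn (fun t => max (worstCase pbar x t - p) 0) (fun _ => (0:ℝ)) (Set.Ioi M) := by
      intro t ht
      simp only
      rw [worstCase_eq_zero pbar x hx (le_of_lt ht), max_eq_right (by linarith)]
    exact (integrableOn_congr_fun this measurableSet_Ioi).2 ((integrableOn_const_iff (C := (0:ℝ))).2 (Or.inl (by simp)))
  refine (h1.union h2).mono_set fun t ht => ?_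
  rcases le_or_gt t M with h | h
  · exact Or.inl ⟨ht, h⟩
  · exact Or.inr h

lemma capacity_nonneg (p : ℝ) : 0 ≤ capacity pbar x p := by
  unfold capacity EpTransform
  exact setIntegral_nonneg measurableSet_Ioi fun t _ => le_max_right _ _

lemma capacity_eq_zero {q : ℝ} (hq : ∀ t, 0 < t → worstCase pbar x t ≤ q) :
    capacity pbar x q = 0 := by
  unfold capacity EpTransform
  have h : EqOn (fun t => max (worstCase pbar x t - q) 0) (fun _ => (0:ℝ)) (Set.Ioi 0) := by
    intro t ht
    simp only [max_eq_right_iff]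
    linarith [hq t ht]
  rw [setIntegral_congr_fun measurableSet_Ioi h, integral_zero]

end helpers

lemma worstCase_append {n m : ℕ} (pbar1 x1 : Fin n → ℝ) (pbar2 x2 : Fin m → ℝ) (t : ℝ) :
    worstCase (Fin.append pbar1 pbar2) (Fin.append x1 x2) t =
      worstCase pbar1 x1 t + worstCase pbar2 x2 t := by
  unfold worstCase
  rw [Fin.sum_univ_add]
  simp [Fin.append_left, Fin.append_right]

section twofleets
variable {n m : ℕ} (pbar1 x1 : Fin n → ℝ) (pbar2 x2 : Fin m → ℝ)

lemma append_nonneg {f1 : Fin n → ℝ} {f2 : Fin m → ℝ} (h1 : ∀ i, 0 ≤ f1 i) (h2 : ∀ i, 0 ≤ f2 i) :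
    ∀ i, 0 ≤ Fin.append f1 f2 i := by
  intro i
  induction i using Fin.addCases with
  | left j => rw [Fin.append_left]; exact h1 j
  | right j => rw [Fin.append_right]; exact h2 j

lemma capacity_append_le (hp1 : ∀ i, 0 ≤ pbar1 i) (hx1 : ∀ i, 0 ≤ x1 i)
    (hp2 : ∀ i, 0 ≤ pbar2 i) (hx2 : ∀ i, 0 ≤ x2 i)
    {p1 p2 : ℝ} (h1 : 0 ≤ p1) (h2 : 0 ≤ p2) :
    capacity (Fin.append pbar1 pbar2) (Fin.append x1 x2) (p1 + p2) ≤
      capacity pbar1 x1 p1 + capacity pbar2 x2 p2 := by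
  have hi1 := integrableOn_maxSub pbar1 x1 hp1 hx1 h1
  have hi2 := integrableOn_maxSub pbar2 x2 hp2 hx2 h2
  have hiA := integrableOn_maxSub (Fin.append pbar1 pbar2) (Fin.append x1 x2)
    (append_nonneg hp1 hp2) (append_nonneg hx1 hx2) (by linarith : (0:ℝ) ≤ p1 + p2)
  unfold capacity EpTransform
  rw [← integral_add hi1 hi2]
  refine setIntegral_mono_on hiA (hi1.add hi2) measurableSet_Ioi fun t _ => ?_
  rw [worstCase_append]
  refine max_le ?_ (by positivity)
  have := le_max_left (worstCase pbar1 x1 t - p1) 0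
  have := le_max_left (worstCase pbar2 x2 t - p2) 0
  linarith

lemma exists_split (hp1 : ∀ i, 0 ≤ pbar1 i) (hx1 : ∀ i, 0 ≤ x1 i)
    (hp2 : ∀ i, 0 ≤ pbar2 i) (hx2 : ∀ i, 0 ≤ x2 i)
    {p : ℝ} (hp : 0 ≤ p) :
    ∃ p1 p2, 0 ≤ p1 ∧ 0 ≤ p2 ∧ p1 + p2 = p ∧
      capacity (Fin.append pbar1 pbar2) (Fin.append x1 x2) p =
        capacity pbar1 x1 p1 + capacity pbar2 x2 p2 := by
  set pbA := Fin.append pbar1 pbar2 with hpbA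
  set xA := Fin.append x1 x2 with hxA
  have hpA : ∀ i, 0 ≤ pbA i := append_nonneg hp1 hp2
  have hxAnn : ∀ i, 0 ≤ xA i := append_nonneg hx1 hx2
  have hadd : ∀ t, worstCase pbA xA t = worstCase pbar1 x1 t + worstCase pbar2 x2 t := by
    intro t; rw [hpbA, hxA, worstCase_append]
  set R : ℝ → ℝ := worstCase pbA xA with hR
  set S : Set ℝ := {t | 0 ≤ t ∧ R t ≤ p} with hS
  have hSne : S.Nonempty := by
    refine ⟨∑ i, xA i, Finset.sum_nonneg fun i _ => hxAnn i, ?_⟩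
    rw [hR, worstCase_eq_zero _ _ hxAnn le_rfl]; exact hp
  have hSbdd : BddBelow S := ⟨0, fun t ht => ht.1⟩
  set tstar : ℝ := sInf S with htstar
  have ht0 : 0 ≤ tstar := le_csInf hSne fun t ht => ht.1
  -- Fact A : below tstar, R t > p
  have factA : ∀ t, 0 ≤ t → t < tstar → p < R t := by
    intro t h0 hlt
    by_contra hc
    exact absurd (csInf_le hSbdd ⟨h0, not_lt.1 hc⟩) (not_le.2 hlt)
  -- Fact C : above tstar, R t ≤ p
  have factC : ∀ t, tstar < t → R t ≤ p := by
    intro t hlt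
    obtain ⟨s, hsS, hst⟩ := (csInf_lt_iff hSbdd hSne).1 hlt
    exact le_trans (worstCase_anti pbA xA hpA hsS.1 hst.le) hsS.2
  -- Fact B : R tstar ≤ p
  have factB : R tstar ≤ p := by
    have hev : ∀ᶠ t in 𝓝[≥] tstar, R tstar ≤ R t := by
      have h1 : ∀ᶠ t in 𝓝[≥] tstar, ∀ i, tstar < xA i → t < xA i := by
        refine Filter.eventually_all.2 fun i => ?_
        by_cases h : tstar < xA i
        · filter_upwards [Ico_mem_nhdsGE h] with t ht _
          exact ht.2
        · exact Eventually.of_forall fun t hc => absurd hc h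
      filter_upwards [h1, self_mem_nhdsWithin] with t ht hmem
      refine Finset.sum_le_sum fun i _ => ?_
      by_cases h : tstar < xA i
      · rw [if_pos ⟨ht0, h⟩, if_pos ⟨le_trans ht0 hmem, ht i h⟩]
      · rw [if_neg (fun hc => h hc.2)]
        split <;> [exact hpA i; exact le_rfl]
    have hfreq : ∃ᶠ t in 𝓝[≥] tstar, t ∈ S := by
      rw [frequently_iff]
      intro U hU
      obtain ⟨u, hu, hsub⟩ := mem_nhdsGE_iff_exists_Ico_subset.1 hU
      obtain ⟨s, hsS, hsu⟩ := (csInf_lt_iff hSbdd hSne).1 hu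
      exact ⟨s, hsub ⟨csInf_le hSbdd hsS, hsu⟩, hsS⟩
    obtain ⟨s, hsS, hle⟩ := (hfreq.and_eventually hev).exists
    exact le_trans hle hsS.2
  rcases eq_or_lt_of_le ht0 with h0 | h0
  · -- tstar = 0
    have hB : worstCase pbar1 x1 0 + worstCase pbar2 x2 0 ≤ p := by
      have h := factB
      rw [← h0] at h
      rw [hadd 0] at h
      exact h
    refine ⟨worstCase pbar1 x1 0, p - worstCase pbar1 x1 0,
      worstCase_nonneg _ _ hp1 0, ?_, by ring, ?_⟩
    · linarith [worstCase_nonneg pbar2 x2 hp2 (0:ℝ)]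
    · have hagg : capacity pbA xA p = 0 :=
        capacity_eq_zero pbA xA fun t ht => factC t (h0 ▸ ht)
      have hc1 : capacity pbar1 x1 (worstCase pbar1 x1 0) = 0 :=
        capacity_eq_zero _ _ fun t ht => worstCase_anti pbar1 x1 hp1 le_rfl ht.le
      have hc2 : capacity pbar2 x2 (p - worstCase pbar1 x1 0) = 0 := by
        refine capacity_eq_zero _ _ fun t ht => ?_
        have h2t : worstCase pbar2 x2 t ≤ worstCase pbar2 x2 0 :=
          worstCase_anti pbar2 x2 hp2 le_rfl ht.le
        linarith
      rw [hagg, hc1, hc2]; ring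
  · -- 0 < tstar
    set c1 : ℝ := ∑ i, if tstar ≤ x1 i then pbar1 i else 0 with hc1def
    set c2 : ℝ := ∑ i, if tstar ≤ x2 i then pbar2 i else 0 with hc2def
    set a1 : ℝ := worstCase pbar1 x1 tstar with ha1def
    set a2 : ℝ := worstCase pbar2 x2 tstar with ha2def
    have ha12 : a1 + a2 ≤ p := by
      have h := factB; rw [hadd tstar] at h; exact h
    have ha1c1 : a1 ≤ c1 := by
      refine Finset.sum_le_sum fun i _ => ?_
      by_cases h : 0 ≤ tstar ∧ tstar < x1 i
      · rw [if_pos h, if_pos h.2.le]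
      · rw [if_neg h]; split <;> [exact hp1 i; exact le_rfl]
    have ha2c2 : a2 ≤ c2 := by
      refine Finset.sum_le_sum fun i _ => ?_
      by_cases h : 0 ≤ tstar ∧ tstar < x2 i
      · rw [if_pos h, if_pos h.2.le]
      · rw [if_neg h]; split <;> [exact hp2 i; exact le_rfl]
    have hlow1 : ∀ t, 0 ≤ t → t < tstar → c1 ≤ worstCase pbar1 x1 t := by
      intro t hnn hlt
      refine Finset.sum_le_sum fun i _ => ?_
      by_cases h : tstar ≤ x1 i
      · rw [if_pos h, if_pos ⟨hnn, lt_of_lt_of_le hlt h⟩]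
      · rw [if_neg h]; split <;> [exact hp1 i; exact le_rfl]
    have hlow2 : ∀ t, 0 ≤ t → t < tstar → c2 ≤ worstCase pbar2 x2 t := by
      intro t hnn hlt
      refine Finset.sum_le_sum fun i _ => ?_
      by_cases h : tstar ≤ x2 i
      · rw [if_pos h, if_pos ⟨hnn, lt_of_lt_of_le hlt h⟩]
      · rw [if_neg h]; split <;> [exact hp2 i; exact le_rfl]
    -- find s < tstar where R s = c1 + c2, hence p < c1 + c2
    have hpc : p < c1 + c2 := by
      have hev1 : ∀ᶠ t in 𝓝[<] tstar, ∀ i, xA i < tstar → xA i < t := by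
        refine Filter.eventually_all.2 fun i => ?_
        by_cases h : xA i < tstar
        · filter_upwards [Ioo_mem_nhdsLT h] with t ht _
          exact ht.1
        · exact Eventually.of_forall fun t hc => absurd hc h
      have hev2 : ∀ᶠ t in 𝓝[<] tstar, t ∈ Set.Ioo 0 tstar :=
        Ioo_mem_nhdsLT h0
      obtain ⟨s, hs1, hs2⟩ := (hev1.and hev2).exists
      have hRs : R s = c1 + c2 := by
        rw [hadd s]
        have e1 : worstCase pbar1 x1 s = c1 := by
          refine Finset.sum_congr rfl fun i _ => ?_
          by_cases h : tstar ≤ x1 i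
          · rw [if_pos ⟨hs2.1.le, lt_of_lt_of_le hs2.2 h⟩, if_pos h]
          · have := hs1 (Fin.castAdd m i)
            rw [hxA, Fin.append_left] at this
            rw [if_neg (fun hc => absurd hc.2 (not_lt.2 (this (not_le.1 h)).le)), if_neg h]
        have e2 : worstCase pbar2 x2 s = c2 := by
          refine Finset.sum_congr rfl fun i _ => ?_
          by_cases h : tstar ≤ x2 i
          · rw [if_pos ⟨hs2.1.le, lt_of_lt_of_le hs2.2 h⟩, if_pos h]
          · have := hs1 (Fin.natAdd n i)
            rw [hxA, Fin.append_right] at this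
            rw [if_neg (fun hc => absurd hc.2 (not_lt.2 (this (not_le.1 h)).le)), if_neg h]
        rw [e1, e2]
      rw [← hRs]
      exact factA s hs2.1.le hs2.2
    -- choose the split point
    set p1 : ℝ := min c1 (p - a2) with hp1def
    set p2 : ℝ := p - p1 with hp2def
    have ha1nn : 0 ≤ a1 := worstCase_nonneg _ _ hp1 tstar
    have ha2nn : 0 ≤ a2 := worstCase_nonneg _ _ hp2 tstar
    have hb1 : a1 ≤ p1 := le_min ha1c1 (by linarith)
    have hb1' : p1 ≤ c1 := min_le_left _ _
    have hb2 : a2 ≤ p2 := by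
      have := min_le_right c1 (p - a2); rw [hp2def]; linarith
    have hb2' : p2 ≤ c2 := by
      rcases min_cases c1 (p - a2) with ⟨h, _⟩ | ⟨h, _⟩
      · rw [hp2def, hp1def, h]; linarith
      · rw [hp2def, hp1def, h]; linarith
    have hp1nn : 0 ≤ p1 := le_trans ha1nn hb1
    have hp2nn : 0 ≤ p2 := le_trans ha2nn hb2
    refine ⟨p1, p2, hp1nn, hp2nn, by rw [hp2def]; ring, ?_⟩
    -- pointwise equality
    have hptwise : EqOn (fun t => max (R t - p) 0)
        (fun t => max (worstCase pbar1 x1 t - p1) 0 + max (worstCase pbar2 x2 t - p2) 0)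
        (Set.Ioi 0) := by
      intro t ht
      have e : R t = worstCase pbar1 x1 t + worstCase pbar2 x2 t := hadd t
      simp only
      rcases lt_or_ge t tstar with hlt | hge
      · have h1 := hlow1 t (le_of_lt ht) hlt
        have h2 := hlow2 t (le_of_lt ht) hlt
        rw [max_eq_left (by linarith), max_eq_left (by linarith), max_eq_left (by linarith)]
        linarith
      · have h1 : worstCase pbar1 x1 t ≤ a1 := worstCase_anti pbar1 x1 hp1 ht0 hge
        have h2 : worstCase pbar2 x2 t ≤ a2 := worstCase_anti pbar2 x2 hp2 ht0 hge
        rw [max_eq_right (by linarith), max_eq_right (by linarith), max_eq_right (by linarith)]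
        ring
    have hi1 := integrableOn_maxSub pbar1 x1 hp1 hx1 hp1nn
    have hi2 := integrableOn_maxSub pbar2 x2 hp2 hx2 hp2nn
    show EpTransform R p = _
    unfold EpTransform capacity
    rw [setIntegral_congr_fun measurableSet_Ioi hptwise, integral_add hi1 hi2]
    rfl
end twofleets

/-- Theorem 2: the discharging flexibility of the aggregate (concatenated) fleet is the
quadrant minus the Minkowski sum of the complementary flexibilities of the two sub-fleets. -/
theorem aggregate_flexibility_minkowski {n m : ℕ}
    (pbar1 x1 : Fin n → ℝ) (pbar2 x2 : Fin m → ℝ)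
    (hp1 : ∀ i, 0 < pbar1 i) (hx1 : ∀ i, 0 ≤ x1 i)
    (hp2 : ∀ i, 0 < pbar2 i) (hx2 : ∀ i, 0 ≤ x2 i) :
    flexibility (Fin.append pbar1 pbar2) (Fin.append x1 x2) =
      {q : ℝ × ℝ | 0 ≤ q.1 ∧ 0 ≤ q.2} \
        (flexibilityCompl pbar1 x1 + flexibilityCompl pbar2 x2) := by
  have hp1' : ∀ i, 0 ≤ pbar1 i := fun i => (hp1 i).le
  have hp2' : ∀ i, 0 ≤ pbar2 i := fun i => (hp2 i).le
  ext q
  simp only [flexibility, flexibilityCompl, Set.mem_setOf_eq, Set.mem_diff, Set.mem_add]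
  constructor
  · rintro ⟨hP, hE, hle⟩
    refine ⟨⟨hP, hE⟩, ?_⟩
    rintro ⟨a, ⟨ha1, ha2, ha3⟩, b, ⟨hb1, hb2, hb3⟩, hab⟩
    have h1 : a.1 + b.1 = q.1 := congrArg Prod.fst hab
    have h2 : a.2 + b.2 = q.2 := congrArg Prod.snd hab
    have h := capacity_append_le pbar1 x1 pbar2 x2 hp1' hx1 hp2' hx2 ha1 hb1
    rw [h1] at h
    linarith
  · rintro ⟨⟨hP, hE⟩, hnot⟩
    refine ⟨hP, hE, ?_⟩
    by_contra hc
    push_neg at hc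
    obtain ⟨p1, p2, h1, h2, h3, h4⟩ :=
      exists_split pbar1 x1 pbar2 x2 hp1' hx1 hp2' hx2 hP
    set δ : ℝ := q.2 - capacity (Fin.append pbar1 pbar2) (Fin.append x1 x2) q.1 with hδ
    have hδpos : 0 < δ := by rw [hδ]; linarith
    refine hnot ⟨(p1, capacity pbar1 x1 p1 + δ / 2),
      ⟨h1, by linarith [capacity_nonneg pbar1 x1 p1], by simp; linarith⟩,
      (p2, capacity pbar2 x2 p2 + δ / 2),
      ⟨h2, by linarith [capacity_nonneg pbar2 x2 p2], by simp; linarith⟩, ?_⟩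
    have : q = (q.1, q.2) := rfl
    rw [this, Prod.mk_add_mk, Prod.mk.injEq]
    constructor
    · exact h3
    · rw [hδ]; linarith
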